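/- For every p with 0 < p < 1/2 there exists a strictly increasing sequence α : ℕ → ℕ of positive integers such that: (i) ∑_{k=0}^{∞} 1/α_k^p < ∞; (ii) λ·∑_{η=0}^{k-1} M_{α_η}^{1/p}/α_η < M_{α_k}^{1/p}/α_k for every k ≥ 1; and (iii) 32·λ·M_{α_{k-1}}^{1/p}/α_{k-1} < M_{α_k}^{1/p-2}/α_k for every k ≥ 1. -/

import Mathlib

open MeasureTheory Complex Finset ENNReal

noncomputable section

namespace VilenkinT

variable (m : ℕ → ℕ)

/-- The generalized powers `M_0 = 1`, `M_{k+1} = m_k M_k`. -/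
def Mgen : ℕ → ℕ
  | 0 => 1
  | k + 1 => m k * Mgen k

/-- The Vilenkin group (as a measurable space of coordinate sequences). -/
abbrev G := ∀ k : ℕ, Fin (m k)

/-- The `j`-th digit of `n` in the generalized number system based on `m`. -/
def digit (n j : ℕ) : ℕ := n / Mgen m j % m j

/-- The Vilenkin system `ψ_n(x) = ∏_k exp(2πi n_k x_k / m_k)`. -/
def psi (n : ℕ) (x : G m) : ℂ :=
  ∏' k : ℕ, Complex.exp (2 * Real.pi * Complex.I * (digit m n k : ℂ) * ((x k : ℕ) : ℂ) / (m k : ℂ))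

/-- Partial sums of the Vilenkin–Fourier series built from coefficients `fhat`. -/
def partialSum (fhat : ℕ → ℂ) (n : ℕ) (x : G m) : ℂ :=
  ∑ k ∈ Finset.range n, fhat k * psi m k x

/-- `Q_n := ∑_{k=0}^{n-1} q_k`. -/
def Qsum (q : ℕ → ℝ) (n : ℕ) : ℝ := ∑ k ∈ Finset.range n, q k

/-- The `T`-means `T_n f = (1/Q_n) ∑_{k=0}^{n-1} q_k S_k f`. -/
def Tmean (q : ℕ → ℝ) (fhat : ℕ → ℂ) (n : ℕ) (x : G m) : ℂ :=
  (1 / (Qsum q n : ℂ)) * ∑ k ∈ Finset.range n, (q k : ℂ) * partialSum m fhat k x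

/-- The maximal operator `T^* f = sup_{n ≥ 1} |T_n f|` (with values in `ℝ≥0∞`). -/
def Tstar (q : ℕ → ℝ) (fhat : ℕ → ℂ) (x : G m) : ℝ≥0∞ :=
  ⨆ (n : ℕ) (_ : 1 ≤ n), ENNReal.ofReal ‖Tmean m q fhat n x‖

/-- The weak-`L_p` norm `sup_{t>0} t μ(g > t)^{1/p}` of an `ℝ≥0∞`-valued function. -/
def weakNorm (μ : Measure (G m)) (p : ℝ) (g : G m → ℝ≥0∞) : ℝ≥0∞ :=
  ⨆ (t : ℝ) (_ : 0 < t), ENNReal.ofReal t * (μ {x | ENNReal.ofReal t < g x}) ^ (1 / p)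

/-- The weak-`L_p` norm of a complex valued function. -/
def weakNormC (μ : Measure (G m)) (p : ℝ) (g : G m → ℂ) : ℝ≥0∞ :=
  weakNorm m μ p fun x => ENNReal.ofReal ‖g x‖

/-- `μ` is the product of the uniform probability measures on the coordinates:
it is a probability measure giving each cylinder of length `n` measure `1/M_n`. -/
def IsHaar (μ : Measure (G m)) : Prop :=
  IsProbabilityMeasure μ ∧
    ∀ (n : ℕ) (x : G m), μ {y | ∀ i < n, y i = x i} = ((Mgen m n : ℝ≥0∞))⁻¹

/-- The σ-algebra generated by the first `n` coordinates. -/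
def coordMS (n : ℕ) : MeasurableSpace (G m) :=
  MeasurableSpace.comap (fun x (i : Fin n) => x i) inferInstance

/-- `f = (f^{(n)})` is a martingale with respect to the filtration of coordinate σ-algebras. -/
def IsVMartingale (μ : Measure (G m)) (f : ℕ → G m → ℂ) : Prop :=
  (∀ n, Integrable (f n) μ) ∧ (∀ n, StronglyMeasurable[coordMS m n] (f n)) ∧
    ∀ n, μ[f (n + 1)|coordMS m n] =ᵐ[μ] f n

/-- `fhat` is the coefficient function of the martingale `f`. -/
def IsCoeff (μ : Measure (G m)) (f : ℕ → G m → ℂ) (fhat : ℕ → ℂ) : Prop :=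
  ∀ k i, i < Mgen m k → fhat i = ∫ x, f k x * (starRingEnd ℂ) (psi m i x) ∂μ

/-- The martingale Hardy space (quasi-)norm `‖f‖_{H_p} = (∫ (sup_n |f^{(n)}|)^p dμ)^{1/p}`. -/
def HardyNorm (μ : Measure (G m)) (p : ℝ) (f : ℕ → G m → ℂ) : ℝ≥0∞ :=
  (∫⁻ x, (⨆ n, ENNReal.ofReal ‖f n x‖) ^ p ∂μ) ^ (1 / p)

/-- The Vilenkin–Fourier coefficients of an integrable function. -/
def fourierCoeff (μ : Measure (G m)) (f : G m → ℂ) (n : ℕ) : ℂ :=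
  ∫ x, f x * (starRingEnd ℂ) (psi m n x) ∂μ

/-- The Fejér means `σ_n f = (1/n) ∑_{k=1}^n S_k f`. -/
def sigmaMean (fhat : ℕ → ℂ) (n : ℕ) (x : G m) : ℂ :=
  (1 / (n : ℂ)) * ∑ k ∈ Finset.Icc 1 n, partialSum m fhat k x

/-- The maximal Fejér operator `σ^* f = sup_{n ≥ 1} |σ_n f|`. -/
def sigmaStar (fhat : ℕ → ℂ) (x : G m) : ℝ≥0∞ :=
  ⨆ (n : ℕ) (_ : 1 ≤ n), ENNReal.ofReal ‖sigmaMean m fhat n x‖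

/-- `l_n := ∑_{k=1}^{n-1} 1/k`. -/
def lsum (n : ℕ) : ℝ := ∑ k ∈ Finset.Icc 1 (n - 1), (1 : ℝ) / k

/-- The Riesz logarithmic means `R_n f = (1/l_n) ∑_{k=1}^{n-1} S_k f / k`. -/
def Riesz (fhat : ℕ → ℂ) (n : ℕ) (x : G m) : ℂ :=
  (1 / (lsum n : ℂ)) * ∑ k ∈ Finset.Icc 1 (n - 1), partialSum m fhat k x / (k : ℂ)

/-- The maximal Riesz operator `R^* f = sup_{n ≥ 2} |R_n f|`. -/
def RieszStar (fhat : ℕ → ℂ) (x : G m) : ℝ≥0∞ :=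
  ⨆ (n : ℕ) (_ : 2 ≤ n), ENNReal.ofReal ‖Riesz m fhat n x‖

/-- The Cesàro numbers `A_n^α = ∏_{j=1}^n (α+j)/j`. -/
def Aces (α : ℝ) (n : ℕ) : ℝ := ∏ j ∈ Finset.Icc 1 n, (α + j) / j

/-- The means `U_n^α f = (1/A_n^α) ∑_{k=0}^{n-1} A_k^{α-1} S_k f`. -/
def Umean (α : ℝ) (fhat : ℕ → ℂ) (n : ℕ) (x : G m) : ℂ :=
  (1 / (Aces α n : ℂ)) * ∑ k ∈ Finset.range n, (Aces (α - 1) k : ℂ) * partialSum m fhat k x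

/-- The maximal operator `U^{α,*} f = sup_{n ≥ 1} |U_n^α f|`. -/
def Ustar (α : ℝ) (fhat : ℕ → ℂ) (x : G m) : ℝ≥0∞ :=
  ⨆ (n : ℕ) (_ : 1 ≤ n), ENNReal.ofReal ‖Umean m α fhat n x‖

/-- The weights `q_0 = 1`, `q_k = k^{α-1}` generating the means `V_n^α`. -/
def qV (α : ℝ) (k : ℕ) : ℝ := if k = 0 then 1 else (k : ℝ) ^ (α - 1)

/-- The weights `q_k = max(0, log^{(β)}(k^α))` generating the means `B_n^{α,β}`. -/
def qB (α : ℝ) (β : ℕ) (k : ℕ) : ℝ := max 0 (Real.log^[β] ((k : ℝ) ^ α))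

/-- The maximal operator `B^{α,β,*} f = sup_{n : Q_n > 0} |B_n^{α,β} f|`. -/
def Bstar (α : ℝ) (β : ℕ) (fhat : ℕ → ℂ) (x : G m) : ℝ≥0∞ :=
  ⨆ (n : ℕ) (_ : 0 < Qsum (qB α β) n), ENNReal.ofReal ‖Tmean m (qB α β) fhat n x‖

open Classical in
/-- The coefficient function `ĉ` of the counterexample martingale:
`ĉ(v) = M_{α_k}^{1/p-1}/α_k` for `M_{α_k} ≤ v < M_{α_k + 1}`, and `0` otherwise. -/
def chat (p : ℝ) (a : ℕ → ℕ) (v : ℕ) : ℝ :=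
  if h : ∃ k, Mgen m (a k) ≤ v ∧ v < Mgen m (a k + 1) then
    (Mgen m (a h.choose) : ℝ) ^ (1 / p - 1) / (a h.choose : ℝ)
  else 0

lemma two_pow_le_Mgen (m : ℕ → ℕ) (hm : ∀ k, 2 ≤ m k) (n : ℕ) : 2 ^ n ≤ Mgen m n := by
  induction n with
  | zero => simp [Mgen]
  | succ n ih =>
    calc 2 ^ (n+1) = 2 * 2 ^ n := by ring
      _ ≤ m n * Mgen m n := Nat.mul_le_mul (hm n) ih

lemma one_le_Mgen (m : ℕ → ℕ) (hm : ∀ k, 2 ≤ m k) (n : ℕ) : 1 ≤ Mgen m n :=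
  le_trans (Nat.one_le_two_pow) (two_pow_le_Mgen m hm n)

lemma exists_big (m : ℕ → ℕ) (hm : ∀ k, 2 ≤ m k) (q : ℝ) (hq : 0 < q) (C : ℝ) (n0 : ℕ) :
    ∃ N : ℕ, n0 < N ∧ C < (Mgen m N : ℝ) ^ q / N := by
  set L := q * Real.log 2 with hL
  have hLpos : 0 < L := mul_pos hq (Real.log_pos one_lt_two)
  obtain ⟨N, hN⟩ := exists_nat_gt (max (n0 : ℝ) (4 * C / L ^ 2))
  have hNn0 : (n0 : ℝ) < N := (le_max_left _ _).trans_lt hN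
  have hN4 : 4 * C / L ^ 2 < N := (le_max_right _ _).trans_lt hN
  have hNpos : 0 < (N : ℝ) := lt_of_le_of_lt (Nat.cast_nonneg n0) hNn0
  refine ⟨N, by exact_mod_cast hNn0, ?_⟩
  have h1 : ((2 : ℝ) ^ N) ≤ (Mgen m N : ℝ) := by exact_mod_cast two_pow_le_Mgen m hm N
  have h2 : ((2 : ℝ) ^ N) ^ q ≤ (Mgen m N : ℝ) ^ q :=
    Real.rpow_le_rpow (by positivity) h1 hq.le
  have h3 : ((2 : ℝ) ^ N) ^ q = Real.exp ((N : ℝ) * L) := by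
    rw [← Real.rpow_natCast (2:ℝ) N, ← Real.rpow_mul (by norm_num),
      Real.rpow_def_of_pos two_pos]
    rw [hL]; ring_nf
  have h4 : ((N : ℝ) * L) ^ 2 / 4 ≤ Real.exp ((N : ℝ) * L) := by
    have hx : Real.exp ((N:ℝ) * L) = Real.exp ((N:ℝ) * L / 2) * Real.exp ((N:ℝ) * L / 2) := by
      rw [← Real.exp_add]; ring_nf
    nlinarith [Real.add_one_le_exp ((N:ℝ) * L / 2), Real.exp_pos ((N:ℝ) * L / 2),
      mul_pos hNpos hLpos]
  have h5 : C < (N : ℝ) * L ^ 2 / 4 := by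
    rw [div_lt_iff₀ (by positivity)] at hN4
    nlinarith
  have h6 : (N : ℝ) * L ^ 2 / 4 ≤ Real.exp ((N : ℝ) * L) / N := by
    rw [le_div_iff₀ hNpos]
    nlinarith
  calc C < (N : ℝ) * L ^ 2 / 4 := h5
    _ ≤ Real.exp ((N : ℝ) * L) / N := h6
    _ = ((2:ℝ) ^ N) ^ q / N := by rw [h3]
    _ ≤ (Mgen m N : ℝ) ^ q / N := by gcongr


/-- The recursively chosen sequence together with the running sum of `M_{a_η}^{1/p}/a_η`. -/
noncomputable def Fseq (m : ℕ → ℕ) (hm : ∀ k, 2 ≤ m k) (p : ℝ) (hq : 0 < 1 / p - 2)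
    (Λ : ℕ) : ℕ → ℕ × ℝ
  | 0 => (1, (Mgen m 1 : ℝ) ^ (1 / p))
  | k + 1 =>
    let prev := Fseq m hm p hq Λ k
    let C := max ((Λ : ℝ) * prev.2)
      (32 * (Λ : ℝ) * (Mgen m prev.1 : ℝ) ^ (1 / p) / (prev.1 : ℝ))
    let N := (exists_big m hm (1 / p - 2) hq C (max prev.1 (2 ^ (k + 1)))).choose
    (N, prev.2 + (Mgen m N : ℝ) ^ (1 / p) / N)

lemma Fseq_spec (m : ℕ → ℕ) (hm : ∀ k, 2 ≤ m k) (p : ℝ) (hq : 0 < 1 / p - 2)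
    (Λ : ℕ) (k : ℕ) :
    max (Fseq m hm p hq Λ k).1 (2 ^ (k + 1)) < (Fseq m hm p hq Λ (k + 1)).1 ∧
      max ((Λ : ℝ) * (Fseq m hm p hq Λ k).2)
        (32 * (Λ : ℝ) * (Mgen m (Fseq m hm p hq Λ k).1 : ℝ) ^ (1 / p) /
          ((Fseq m hm p hq Λ k).1 : ℝ)) <
        (Mgen m (Fseq m hm p hq Λ (k + 1)).1 : ℝ) ^ (1 / p - 2) /
          ((Fseq m hm p hq Λ (k + 1)).1 : ℝ) := by
  have h := (exists_big m hm (1 / p - 2) hq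
    (max ((Λ : ℝ) * (Fseq m hm p hq Λ k).2)
      (32 * (Λ : ℝ) * (Mgen m (Fseq m hm p hq Λ k).1 : ℝ) ^ (1 / p) /
        ((Fseq m hm p hq Λ k).1 : ℝ)))
    (max (Fseq m hm p hq Λ k).1 (2 ^ (k + 1)))).choose_spec
  exact h

lemma Fseq_snd (m : ℕ → ℕ) (hm : ∀ k, 2 ≤ m k) (p : ℝ) (hq : 0 < 1 / p - 2)
    (Λ : ℕ) (k : ℕ) :
    (Fseq m hm p hq Λ k).2 = ∑ η ∈ Finset.range (k + 1),
      (Mgen m (Fseq m hm p hq Λ η).1 : ℝ) ^ (1 / p) / ((Fseq m hm p hq Λ η).1 : ℝ) := by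
  induction k with
  | zero => simp [Fseq]
  | succ k ih =>
    rw [Finset.sum_range_succ, ← ih]
    rfl


/-- For `0 < p < 1/2` there is a strictly increasing sequence `a` of positive
integers with `∑ 1/a_k^p < ∞`, `λ ∑_{η<k} M_{a_η}^{1/p}/a_η < M_{a_k}^{1/p}/a_k` and
`32 λ M_{a_{k-1}}^{1/p}/a_{k-1} < M_{a_k}^{1/p-2}/a_k` for all `k ≥ 1`,
where `λ = sup_k m_k`. -/
theorem exists_lacunary_sequence
    (m : ℕ → ℕ) (hm : ∀ k, 2 ≤ m k) (Λ : ℕ) (hΛ : IsLUB (Set.range m) Λ)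
    (p : ℝ) (hp : 0 < p) (hp2 : p < 1 / 2) :
    ∃ a : ℕ → ℕ, StrictMono a ∧ (∀ k, 1 ≤ a k) ∧
      Summable (fun k => 1 / (a k : ℝ) ^ p) ∧
      (∀ k : ℕ, 1 ≤ k →
        (Λ : ℝ) * ∑ η ∈ Finset.range k, (Mgen m (a η) : ℝ) ^ (1 / p) / (a η : ℝ) <
          (Mgen m (a k) : ℝ) ^ (1 / p) / (a k : ℝ)) ∧
      ∀ k : ℕ, 1 ≤ k →
        32 * (Λ : ℝ) * (Mgen m (a (k - 1)) : ℝ) ^ (1 / p) / (a (k - 1) : ℝ) <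
          (Mgen m (a k) : ℝ) ^ (1 / p - 2) / (a k : ℝ) := by
  have hq : 0 < 1 / p - 2 := by
    have h2 : 2 < 1 / p := by
      rw [lt_div_iff₀ hp]; linarith
    linarith
  set a : ℕ → ℕ := fun k => (Fseq m hm p hq Λ k).1 with ha
  have hlt : ∀ k, a k < a (k + 1) := fun k =>
    lt_of_le_of_lt (le_max_left _ _) (Fseq_spec m hm p hq Λ k).1
  have hmono : StrictMono a := strictMono_nat_of_lt_succ hlt
  have hpow : ∀ k, 2 ^ k ≤ a k := by
    intro k
    cases k with
    | zero => exact le_refl 1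
    | succ k => exact le_of_lt (lt_of_le_of_lt (le_max_right _ _) (Fseq_spec m hm p hq Λ k).1)
  have hone : ∀ k, 1 ≤ a k := fun k => le_trans Nat.one_le_two_pow (hpow k)
  have hMone : ∀ n, (1 : ℝ) ≤ (Mgen m n : ℝ) := fun n => by
    exact_mod_cast one_le_Mgen m hm n
  have hapos : ∀ k, (0 : ℝ) < (a k : ℝ) := fun k => by
    exact_mod_cast Nat.lt_of_lt_of_le Nat.zero_lt_one (hone k)
  refine ⟨a, hmono, hone, ?_, ?_, ?_⟩
  · -- Summability
    have h2p : 1 < (2 : ℝ) ^ p := Real.one_lt_rpow_iff_of_pos two_pos |>.mpr (Or.inl ⟨one_lt_two, hp⟩)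
    refine Summable.of_nonneg_of_le (fun k => by positivity)
      (fun k => ?_) (summable_geometric_of_lt_one (by positivity)
        (inv_lt_one_of_one_lt₀ h2p))
    have h1 : ((2 : ℝ) ^ k) ≤ (a k : ℝ) := by exact_mod_cast hpow k
    have h2 : ((2 : ℝ) ^ k) ^ p ≤ (a k : ℝ) ^ p :=
      Real.rpow_le_rpow (by positivity) h1 hp.le
    have h3 : ((2 : ℝ) ^ k) ^ p = ((2 : ℝ) ^ p) ^ k := by
      rw [← Real.rpow_natCast (2 : ℝ) k, ← Real.rpow_natCast ((2 : ℝ) ^ p) k,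
        ← Real.rpow_mul (by norm_num), ← Real.rpow_mul (by norm_num)]
      ring_nf
    calc 1 / (a k : ℝ) ^ p ≤ 1 / ((2 : ℝ) ^ k) ^ p :=
          one_div_le_one_div_of_le (by positivity) h2
      _ = ((2 : ℝ) ^ p)⁻¹ ^ k := by rw [h3, one_div, ← inv_pow]
  · -- Condition (ii)
    intro k hk
    obtain ⟨j, rfl⟩ : ∃ j, k = j + 1 := ⟨k - 1, (Nat.succ_pred_eq_of_pos hk).symm⟩
    have hsum : ∑ η ∈ Finset.range (j + 1), (Mgen m (a η) : ℝ) ^ (1 / p) / (a η : ℝ)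
        = (Fseq m hm p hq Λ j).2 := (Fseq_snd m hm p hq Λ j).symm
    rw [hsum]
    have h1 := (Fseq_spec m hm p hq Λ j).2
    have h2 : (Λ : ℝ) * (Fseq m hm p hq Λ j).2 <
        (Mgen m (a (j + 1)) : ℝ) ^ (1 / p - 2) / (a (j + 1) : ℝ) :=
      lt_of_le_of_lt (le_max_left _ _) h1
    refine lt_of_lt_of_le h2 ?_
    exact (div_le_div_iff_of_pos_right (hapos _)).mpr
      (Real.rpow_le_rpow_of_exponent_le (hMone _) (by linarith))
  · -- Condition (iii)
    intro k hk
    obtain ⟨j, rfl⟩ : ∃ j, k = j + 1 := ⟨k - 1, (Nat.succ_pred_eq_of_pos hk).symm⟩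
    have h1 := (Fseq_spec m hm p hq Λ j).2
    simpa using lt_of_le_of_lt (le_max_right _ _) h1


end VilenkinT
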